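/- Bound on the variation-of-constants kernel for purely imaginary κ: let c ∈ ℝ, κ := ic, let α : [0,T] → ℂ be continuous with κ + (1/2)α(τ) ≠ 0 for all τ ∈ [0,T], and define Z_σ(s) := exp( σ( κ s + (1/2)∫₀ˢ α(u) du ) ) / ( κ + (1/2)α(s) )^{1/2} for σ = ±1, using the principal complex square root, and K(t,τ) := (1/2)( Z_{+}(t) Z_{−}(τ) − Z_{−}(t) Z_{+}(τ) ). Then for all 0 ≤ τ ≤ t ≤ T, |K(t,τ)| ≤ λ(t)⁻¹ · exp( (1/2)∫₀ᵗ |α(s)| ds ) · exp( −(1/2)∫₀^τ |α(s)| ds ), where λ(t) := inf_{0≤u≤t} |κ + (1/2)α(u)|. -/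

import Mathlib

/-- Bound on the variation-of-constants kernel for purely imaginary `κ = ic`:
with `Z_±(s) = exp(±(κs + (1/2)∫₀ˢα)) / (κ + α(s)/2)^{1/2}` and
`K(t,τ) = (1/2)(Z₊(t)Z₋(τ) − Z₋(t)Z₊(τ))`, one has
`|K(t,τ)| ≤ λ(t)⁻¹ exp((1/2)∫₀ᵗ|α|) exp(−(1/2)∫₀^τ|α|)` for `0 ≤ τ ≤ t ≤ T`,
where `λ(t) = inf_{0≤u≤t} |κ + α(u)/2|`. -/
theorem kernel_bound_purely_imaginary (T c : ℝ) (κ : ℂ) (hκ : κ = Complex.I * c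
    ) (α : ℝ → ℂ) (hαc : ContinuousOn α (Set.Icc 0 T))
    (hne : ∀ τ ∈ Set.Icc (0:ℝ) T, κ + α τ / 2 ≠ 0)
    (Zp Zm : ℝ → ℂ)
    (hZp : ∀ s : ℝ, Zp s =
      Complex.exp (κ * s + (1 / 2) * ∫ u in (0:ℝ)..s, α u) / (κ + α s / 2) ^ ((1:ℂ) / 2))
    (hZm : ∀ s : ℝ, Zm s =
      Complex.exp (-(κ * s + (1 / 2) * ∫ u in (0:ℝ)..s, α u)) / (κ + α s / 2) ^ ((1:ℂ) / 2))
    (K : ℝ → ℝ → ℂ)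
    (hK : ∀ t τ : ℝ, K t τ = (1 / 2) * (Zp t * Zm τ - Zm t * Zp τ)) :
    ∀ t τ : ℝ, 0 ≤ τ → τ ≤ t → t ≤ T →
      ‖K t τ‖ ≤
        (sInf ((fun u => ‖κ + α u / 2‖) '' Set.Icc 0 t))⁻¹ *
          Real.exp ((1 / 2) * ∫ s in (0:ℝ)..t, ‖α s‖) *
          Real.exp (-(1 / 2) * ∫ s in (0:ℝ)..τ, ‖α s‖) := by
  intro t τ hτ0 hτt htT
  have ht0 : (0:ℝ) ≤ t := hτ0.trans hτt
  have hτT : τ ≤ T := hτt.trans htT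
  set f : ℝ → ℝ := fun u => ‖κ + α u / 2‖ with hfdef
  set lam : ℝ := sInf (f '' Set.Icc 0 t) with hlam
  have hsub : Set.Icc (0:ℝ) t ⊆ Set.Icc 0 T := Set.Icc_subset_Icc le_rfl htT
  have hgc : ContinuousOn (fun u => κ + α u / 2) (Set.Icc 0 t) :=
    continuousOn_const.add ((hαc.mono hsub).div_const 2)
  have hfc : ContinuousOn f (Set.Icc 0 t) :=
    continuous_norm.comp_continuousOn hgc
  -- lam pos
  obtain ⟨u0, hu0, hu0eq⟩ := (isCompact_Icc (a := (0:ℝ)) (b := t)).exists_sInf_image_eq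
    (Set.nonempty_Icc.2 ht0) hfc
  have hlampos : 0 < lam := by
    rw [hlam, hu0eq]
    exact norm_pos_iff.mpr (hne u0 (hsub hu0))
  have hbdd : BddBelow (f '' Set.Icc 0 t) :=
    ⟨0, fun y ⟨u, _, hu⟩ => hu ▸ norm_nonneg _⟩
  have hlamle : ∀ u ∈ Set.Icc (0:ℝ) t, lam ≤ f u := fun u hu =>
    csInf_le hbdd ⟨u, hu, rfl⟩
  -- integrability
  have hIτ : IntervalIntegrable α MeasureTheory.volume 0 τ := by
    apply ContinuousOn.intervalIntegrable
    rw [Set.uIcc_of_le hτ0]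
    exact hαc.mono (Set.Icc_subset_Icc le_rfl hτT)
  have hIτt : IntervalIntegrable α MeasureTheory.volume τ t := by
    apply ContinuousOn.intervalIntegrable
    rw [Set.uIcc_of_le hτt]
    exact hαc.mono (Set.Icc_subset_Icc hτ0 htT)
  have hIabsτ : IntervalIntegrable (fun s => ‖α s‖) MeasureTheory.volume 0 τ := by
    apply ContinuousOn.intervalIntegrable
    rw [Set.uIcc_of_le hτ0]
    exact continuous_norm.comp_continuousOn (hαc.mono (Set.Icc_subset_Icc le_rfl hτT))
  have hIabsτt : IntervalIntegrable (fun s => ‖α s‖) MeasureTheory.volume τ t := by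
    apply ContinuousOn.intervalIntegrable
    rw [Set.uIcc_of_le hτt]
    exact continuous_norm.comp_continuousOn (hαc.mono (Set.Icc_subset_Icc hτ0 htT))
  set at' : ℝ := (∫ u in (0:ℝ)..t, α u).re with hat
  set aτ : ℝ := (∫ u in (0:ℝ)..τ, α u).re with haτ
  set bt : ℝ := ∫ s in (0:ℝ)..t, ‖α s‖ with hbt
  set bτ : ℝ := ∫ s in (0:ℝ)..τ, ‖α s‖ with hbτ
  have hsplit : (∫ u in (0:ℝ)..t, α u) = (∫ u in (0:ℝ)..τ, α u) + ∫ u in τ..t, α u :=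
    (intervalIntegral.integral_add_adjacent_intervals hIτ hIτt).symm
  have hsplitb : bt = bτ + ∫ s in τ..t, ‖α s‖ :=
    (intervalIntegral.integral_add_adjacent_intervals hIabsτ hIabsτt).symm
  have key : |at' - aτ| ≤ bt - bτ := by
    have h1 : at' - aτ = (∫ u in τ..t, α u).re := by
      rw [hat, haτ, hsplit]; simp
    have h2 : |((∫ u in τ..t, α u).re)| ≤ ‖∫ u in τ..t, α u‖ :=
      Complex.abs_re_le_norm _
    have h3 : ‖∫ u in τ..t, α u‖ ≤ ∫ s in τ..t, ‖α s‖ := by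
      simpa using
        intervalIntegral.norm_integral_le_integral_norm (f := α) (μ := MeasureTheory.volume) hτt
    rw [h1, hsplitb]
    calc |(∫ u in τ..t, α u).re| ≤ ‖∫ u in τ..t, α u‖ := Complex.abs_re_le_norm _
      _ ≤ ∫ s in τ..t, ‖α s‖ := h3
      _ = bτ + (∫ s in τ..t, ‖α s‖) - bτ := by ring
  -- abs of Zp, Zm
  have hre : ∀ s : ℝ, (κ * s + (1 / 2) * ∫ u in (0:ℝ)..s, α u).re
      = (1/2) * (∫ u in (0:ℝ)..s, α u).re := by
    intro s
    simp [hκ, Complex.add_re, Complex.mul_re, Complex.I_re, Complex.I_im]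
  have habscpow : ∀ s ∈ Set.Icc (0:ℝ) T,
      ‖(κ + α s / 2) ^ ((1:ℂ) / 2)‖ = f s ^ ((1:ℝ)/2) := by
    intro s hs
    rw [Complex.norm_cpow_of_ne_zero (hne s hs)]
    norm_num
    rfl
  have habsZp : ∀ s ∈ Set.Icc (0:ℝ) T, ‖Zp s‖
      = Real.exp ((1/2) * (∫ u in (0:ℝ)..s, α u).re) / f s ^ ((1:ℝ)/2) := by
    intro s hs
    rw [hZp s, norm_div, Complex.norm_exp, hre s, habscpow s hs]
  have habsZm : ∀ s ∈ Set.Icc (0:ℝ) T, ‖Zm s‖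
      = Real.exp (-((1/2) * (∫ u in (0:ℝ)..s, α u).re)) / f s ^ ((1:ℝ)/2) := by
    intro s hs
    rw [hZm s, norm_div, Complex.norm_exp, Complex.neg_re, hre s, habscpow s hs]
  have htmem : t ∈ Set.Icc (0:ℝ) T := ⟨ht0, htT⟩
  have hτmem : τ ∈ Set.Icc (0:ℝ) T := ⟨hτ0, hτT⟩
  set P : ℝ := f t ^ ((1:ℝ)/2) * f τ ^ ((1:ℝ)/2) with hP
  have hft : 0 < f t := norm_pos_iff.mpr (hne t htmem)
  have hfτ : 0 < f τ := norm_pos_iff.mpr (hne τ hτmem)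
  have hPpos : 0 < P := mul_pos (Real.rpow_pos_of_pos hft _) (Real.rpow_pos_of_pos hfτ _)
  have hlamP : lam ≤ P := by
    have h1 : lam ^ ((1:ℝ)/2) ≤ f t ^ ((1:ℝ)/2) :=
      Real.rpow_le_rpow hlampos.le (hlamle t ⟨ht0, le_rfl⟩) (by norm_num)
    have h2 : lam ^ ((1:ℝ)/2) ≤ f τ ^ ((1:ℝ)/2) :=
      Real.rpow_le_rpow hlampos.le (hlamle τ ⟨hτ0, hτt⟩) (by norm_num)
    calc lam = lam ^ ((1:ℝ)/2) * lam ^ ((1:ℝ)/2) := by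
          rw [← Real.rpow_add hlampos]; norm_num
      _ ≤ P := mul_le_mul h1 h2 (Real.rpow_nonneg hlampos.le _)
          (Real.rpow_nonneg hft.le _)
  set D : ℝ := (1/2)*(at' - aτ) with hD
  have hE1 : ‖Zp t * Zm τ‖ = Real.exp D / P := by
    rw [norm_mul, habsZp t htmem, habsZm τ hτmem, div_mul_div_comm, ← Real.exp_add, hD, hP,
      hat, haτ]
    congr 1
    ring_nf
  have hE2 : ‖Zm t * Zp τ‖ = Real.exp (-D) / P := by
    rw [norm_mul, habsZm t htmem, habsZp τ hτmem, div_mul_div_comm, ← Real.exp_add, hD, hP,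
      hat, haτ]
    rw [mul_comm (f t ^ ((1:ℝ)/2)) (f τ ^ ((1:ℝ)/2))]
    congr 1
    ring_nf
  have hDle : D ≤ (1/2)*(bt - bτ) := by
    have := le_abs_self (at' - aτ); rw [hD]; linarith
  have hnDle : -D ≤ (1/2)*(bt - bτ) := by
    have := neg_abs_le (at' - aτ); rw [hD]; linarith
  have hRHS : lam⁻¹ * Real.exp ((1/2)*bt) * Real.exp (-(1/2)*bτ)
      = Real.exp ((1/2)*(bt-bτ)) / lam := by
    rw [mul_assoc, ← Real.exp_add,
      show (1/2)*bt + (-(1/2)*bτ) = (1/2)*(bt-bτ) by ring, inv_mul_eq_div]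
  calc ‖K t τ‖
      = (1/2) * ‖Zp t * Zm τ - Zm t * Zp τ‖ := by
        rw [hK t τ, norm_mul]; norm_num
    _ ≤ (1/2) * (‖Zp t * Zm τ‖ + ‖Zm t * Zp τ‖) := by
        gcongr
        simpa using norm_sub_le (Zp t * Zm τ) (Zm t * Zp τ)
    _ = (1/2) * (Real.exp D / P + Real.exp (-D) / P) := by rw [hE1, hE2]
    _ ≤ (1/2) * (Real.exp ((1/2)*(bt-bτ)) / P + Real.exp ((1/2)*(bt-bτ)) / P) := by
        gcongr <;>
          first
            | exact Real.exp_le_exp.2 hDle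
            | exact Real.exp_le_exp.2 hnDle
    _ = Real.exp ((1/2)*(bt-bτ)) / P := by ring
    _ ≤ Real.exp ((1/2)*(bt-bτ)) / lam := by gcongr
    _ = lam⁻¹ * Real.exp ((1/2)*bt) * Real.exp (-(1/2)*bτ) := hRHS.symm
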